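/- Let v, w ∈ ℝ² be linearly independent with det(v, w) = 1, let K₁ ⊆ ℝ² be a compact convex set with 0, v, w ∈ K₁ and K₁ ⊆ conv{0, v, w, v + w}, and let K := K₁ ∪ K₂ ∪ (−K₁) ∪ (−K₂), where K₂ := {α · z_λ : λ ∈ [0,1], 0 ≤ α ≤ 1/s(λ)}, z_λ := (1−λ)·w − λ·v, and s(λ) := sup_{x ∈ K₁} |det(x, z_λ)|. Then for every λ ∈ [0,1], sup_{x ∈ K} |det(x, z_λ)| = sup_{x ∈ K₁} |det(x, z_λ)| = s(λ); and for every θ ∈ [0,1], writing u_θ := (1−θ)·w + θ·v, sup_{y ∈ K} |det(y, u_θ)| = sup_{y ∈ K₂} |det(y, u_θ)|. -/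

import Mathlib

/-- The standard determinant form on ℝ². -/
def det2 (x y : ℝ × ℝ) : ℝ := x.1 * y.2 - x.2 * y.1

lemma det2_coef (a b c d : ℝ) (v w : ℝ × ℝ) :
    det2 (a • v + b • w) (c • v + d • w) = (a * d - b * c) * det2 v w := by
  simp only [det2, Prod.fst_add, Prod.snd_add, Prod.smul_fst, Prod.smul_snd, smul_eq_mul]
  ring

lemma det2_neg_left (x y : ℝ × ℝ) : det2 (-x) y = -det2 x y := by
  simp [det2]; ring

lemma det2_smul_left (a : ℝ) (x y : ℝ × ℝ) : det2 (a • x) y = a * det2 x y := by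
  simp only [det2, Prod.smul_fst, Prod.smul_snd, smul_eq_mul]
  ring

lemma mem_hull_coeffs (v w : ℝ × ℝ) {x : ℝ × ℝ}
    (hx : x ∈ convexHull ℝ {0, v, w, v + w}) :
    ∃ a b : ℝ, 0 ≤ a ∧ a ≤ 1 ∧ 0 ≤ b ∧ b ≤ 1 ∧ x = a • v + b • w := by
  have hsub : convexHull ℝ {0, v, w, v + w} ⊆
      {p : ℝ × ℝ | ∃ a b : ℝ, 0 ≤ a ∧ a ≤ 1 ∧ 0 ≤ b ∧ b ≤ 1 ∧ p = a • v + b • w} := by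
    apply convexHull_min
    · intro p hp
      simp only [Set.mem_insert_iff, Set.mem_singleton_iff] at hp
      rcases hp with rfl | rfl | rfl | rfl
      · exact ⟨0, 0, le_refl _, zero_le_one, le_refl _, zero_le_one, by simp⟩
      · exact ⟨1, 0, zero_le_one, le_refl _, le_refl _, zero_le_one, by simp⟩
      · exact ⟨0, 1, le_refl _, zero_le_one, zero_le_one, le_refl _, by simp⟩
      · exact ⟨1, 1, zero_le_one, le_refl _, zero_le_one, le_refl _, by simp⟩
    · rintro p ⟨a1, b1, ha1, ha1', hb1, hb1', rfl⟩ q ⟨a2, b2, ha2, ha2', hb2, hb2', rfl⟩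
        ta tb hta htb htab
      refine ⟨ta * a1 + tb * a2, ta * b1 + tb * b2, ?_, ?_, ?_, ?_, ?_⟩
      · positivity
      · nlinarith
      · positivity
      · nlinarith
      · module
  exact hsub hx

/-- Suprema of the determinant form over the Radon body `K` in second-quadrant
directions are attained on `K₁`, and in first-quadrant directions on `K₂`. -/
theorem stmt_10 (v w : ℝ × ℝ) (hind : LinearIndependent ℝ ![v, w])
    (hdet : det2 v w = 1)
    (K₁ : Set (ℝ × ℝ)) (hK₁c : IsCompact K₁) (hK₁conv : Convex ℝ K₁)
    (h0 : (0 : ℝ × ℝ) ∈ K₁) (hvK : v ∈ K₁) (hwK : w ∈ K₁)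
    (hK₁sub : K₁ ⊆ convexHull ℝ {0, v, w, v + w})
    (z : ℝ → ℝ × ℝ) (hz : ∀ l : ℝ, z l = (1 - l) • w - l • v)
    (s : ℝ → ℝ) (hs : ∀ l : ℝ, s l = sSup ((fun x => |det2 x (z l)|) '' K₁))
    (K₂ : Set (ℝ × ℝ))
    (hK₂ : K₂ = {p | ∃ l ∈ Set.Icc (0 : ℝ) 1, ∃ α : ℝ,
      0 ≤ α ∧ α ≤ (s l)⁻¹ ∧ p = α • z l})
    (K : Set (ℝ × ℝ)) (hK : K = K₁ ∪ K₂ ∪ (-K₁) ∪ (-K₂))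
    (u : ℝ → ℝ × ℝ) (hu : ∀ θ : ℝ, u θ = (1 - θ) • w + θ • v) :
    (∀ l ∈ Set.Icc (0 : ℝ) 1,
      sSup ((fun x => |det2 x (z l)|) '' K) = s l) ∧
    (∀ θ ∈ Set.Icc (0 : ℝ) 1,
      sSup ((fun y => |det2 y (u θ)|) '' K) =
        sSup ((fun y => |det2 y (u θ)|) '' K₂)) := by
  have hco : ∀ x ∈ K₁, ∃ a b : ℝ, 0 ≤ a ∧ a ≤ 1 ∧ 0 ≤ b ∧ b ≤ 1 ∧ x = a • v + b • w :=
    fun x hx => mem_hull_coeffs v w (hK₁sub hx)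
  have hz' : ∀ l : ℝ, z l = (-l) • v + (1 - l) • w := by
    intro l; rw [hz]; module
  have hu' : ∀ θ : ℝ, u θ = θ • v + (1 - θ) • w := by
    intro θ; rw [hu]; module
  have hK₁K : K₁ ⊆ K := by
    rw [hK]; intro y hy; exact Or.inl (Or.inl (Or.inl hy))
  have hK₂K : K₂ ⊆ K := by
    rw [hK]; intro y hy; exact Or.inl (Or.inl (Or.inr hy))
  -- pointwise bound 1 on K₁
  have hbdd1 : ∀ l ∈ Set.Icc (0:ℝ) 1, ∀ x ∈ K₁, |det2 x (z l)| ≤ 1 := by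
    rintro l ⟨hl0, hl1⟩ x hx
    obtain ⟨a, b, ha, ha', hb, hb', rfl⟩ := hco x hx
    rw [hz', det2_coef, hdet, mul_one, abs_le]
    constructor <;> nlinarith
  have hK1ne : ∀ l : ℝ, ((fun x => |det2 x (z l)|) '' K₁).Nonempty :=
    fun l => ⟨_, Set.mem_image_of_mem _ h0⟩
  have hK1bdd : ∀ l ∈ Set.Icc (0:ℝ) 1, BddAbove ((fun x => |det2 x (z l)|) '' K₁) := by
    intro l hl
    exact ⟨1, by rintro _ ⟨x, hx, rfl⟩; exact hbdd1 l hl x hx⟩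
  have hsle1 : ∀ l ∈ Set.Icc (0:ℝ) 1, s l ≤ 1 := by
    intro l hl
    rw [hs]
    exact csSup_le (hK1ne l) (by rintro _ ⟨x, hx, rfl⟩; exact hbdd1 l hl x hx)
  have hle_s : ∀ l ∈ Set.Icc (0:ℝ) 1, ∀ x ∈ K₁, |det2 x (z l)| ≤ s l := by
    intro l hl x hx
    rw [hs]
    exact le_csSup (hK1bdd l hl) (Set.mem_image_of_mem _ hx)
  have hdvz : ∀ l : ℝ, det2 v (z l) = 1 - l := by
    intro l
    have h1 : v = (1:ℝ) • v + (0:ℝ) • w := by module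
    rw [h1, hz', det2_coef, hdet]; ring
  have hdwz : ∀ l : ℝ, det2 w (z l) = l := by
    intro l
    have h1 : w = (0:ℝ) • v + (1:ℝ) • w := by module
    rw [h1, hz', det2_coef, hdet]; ring
  have hsv : ∀ l ∈ Set.Icc (0:ℝ) 1, 1 - l ≤ s l := by
    intro l hl
    have h := hle_s l hl v hvK
    rw [hdvz, abs_of_nonneg (by linarith [hl.2])] at h
    exact h
  have hsw : ∀ l ∈ Set.Icc (0:ℝ) 1, l ≤ s l := by
    intro l hl
    have h := hle_s l hl w hwK
    rw [hdwz, abs_of_nonneg hl.1] at h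
    exact h
  have hspos : ∀ l ∈ Set.Icc (0:ℝ) 1, 0 < s l := by
    intro l hl
    have h1 := hsv l hl
    have h2 := hsw l hl
    linarith
  have hdzz : ∀ μ l : ℝ, det2 (z μ) (z l) = l - μ := by
    intro μ l
    rw [hz' μ, hz' l, det2_coef, hdet]; ring
  have hdzu : ∀ μ θ : ℝ, det2 (z μ) (u θ) = -(μ + θ - 2 * μ * θ) := by
    intro μ θ
    rw [hz' μ, hu' θ, det2_coef, hdet]; ring
  have hKne0 : (0 : ℝ × ℝ) ∈ K := hK₁K h0
  constructor
  · -- first statement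
    intro l hl
    have hbK : ∀ x ∈ K, |det2 x (z l)| ≤ s l := by
      intro x hx
      rw [hK] at hx
      have h1 : ∀ y ∈ K₁, |det2 y (z l)| ≤ s l := hle_s l hl
      have h2 : ∀ y ∈ K₂, |det2 y (z l)| ≤ s l := by
        intro y hy
        rw [hK₂] at hy
        obtain ⟨μ, hμ, α, hα0, hα1, rfl⟩ := hy
        have hsμpos := hspos μ hμ
        have heq : |det2 (α • z μ) (z l)| = α * |l - μ| := by
          rw [det2_smul_left, hdzz, abs_mul, abs_of_nonneg hα0]
        rw [heq]
        have hlm : |l - μ| ≤ s μ * s l := by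
          have h3 := hsv μ hμ; have h4 := hsw μ hμ
          have h5 := hsv l hl; have h6 := hsw l hl
          rw [abs_le]
          constructor <;> nlinarith [hl.1, hl.2, hμ.1, hμ.2]
        calc α * |l - μ| ≤ (s μ)⁻¹ * |l - μ| :=
              mul_le_mul_of_nonneg_right hα1 (abs_nonneg _)
          _ ≤ (s μ)⁻¹ * (s μ * s l) :=
              mul_le_mul_of_nonneg_left hlm (by positivity)
          _ = s l := by field_simp
      have hneg : ∀ y : ℝ × ℝ, |det2 (-y) (z l)| = |det2 y (z l)| := by
        intro y; rw [det2_neg_left, abs_neg]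
      rcases hx with ((hx | hx) | hx) | hx
      · exact h1 x hx
      · exact h2 x hx
      · rw [← neg_neg x, hneg]; exact h1 (-x) (Set.mem_neg.mp hx)
      · rw [← neg_neg x, hneg]; exact h2 (-x) (Set.mem_neg.mp hx)
    have hKne : ((fun x => |det2 x (z l)|) '' K).Nonempty :=
      ⟨_, Set.mem_image_of_mem _ hKne0⟩
    apply le_antisymm
    · exact csSup_le hKne (by rintro _ ⟨x, hx, rfl⟩; exact hbK x hx)
    · rw [hs]
      exact csSup_le_csSup ⟨s l, by rintro _ ⟨x, hx, rfl⟩; exact hbK x hx⟩ (hK1ne l)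
        (Set.image_mono hK₁K)
  · -- second statement
    intro θ hθ
    have h01 : (0:ℝ) ∈ Set.Icc (0:ℝ) 1 := ⟨le_refl _, zero_le_one⟩
    have h11 : (1:ℝ) ∈ Set.Icc (0:ℝ) 1 := ⟨zero_le_one, le_refl _⟩
    have hwK₂ : w ∈ K₂ := by
      rw [hK₂]
      refine ⟨0, h01, 1, zero_le_one, ?_, ?_⟩
      · exact (one_le_inv₀ (hspos 0 h01)).mpr (hsle1 0 h01)
      · rw [hz]; module
    have hvK₂ : -v ∈ K₂ := by
      rw [hK₂]
      refine ⟨1, h11, 1, zero_le_one, ?_, ?_⟩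
      · exact (one_le_inv₀ (hspos 1 h11)).mpr (hsle1 1 h11)
      · rw [hz]; module
    have hGw : |det2 w (u θ)| = θ := by
      have h1 : w = (0:ℝ) • v + (1:ℝ) • w := by module
      rw [h1, hu', det2_coef, hdet]
      rw [show ((0:ℝ) * (1 - θ) - 1 * θ) * 1 = -θ by ring, abs_neg, abs_of_nonneg hθ.1]
    have hGv : |det2 (-v) (u θ)| = 1 - θ := by
      rw [det2_neg_left, abs_neg]
      have h1 : v = (1:ℝ) • v + (0:ℝ) • w := by module
      rw [h1, hu', det2_coef, hdet]
      rw [show ((1:ℝ) * (1 - θ) - 0 * θ) * 1 = 1 - θ by ring, abs_of_nonneg (by linarith [hθ.2])]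
    have hbK₂ : ∀ y ∈ K₂, |det2 y (u θ)| ≤ 2 := by
      intro y hy
      rw [hK₂] at hy
      obtain ⟨μ, hμ, α, hα0, hα1, rfl⟩ := hy
      have hsμpos := hspos μ hμ
      have h1 : |det2 (z μ) (u θ)| ≤ 1 := by
        rw [hdzu, abs_neg, abs_le]
        constructor <;> nlinarith [hμ.1, hμ.2, hθ.1, hθ.2]
      have h12 : (1:ℝ)/2 ≤ s μ := by
        have := hsv μ hμ; have := hsw μ hμ; linarith
      have h2 : α ≤ 2 := by
        refine le_trans hα1 ?_
        calc (s μ)⁻¹ ≤ ((1:ℝ)/2)⁻¹ := by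
              apply inv_anti₀ (by norm_num) h12
          _ = 2 := by norm_num
      calc |det2 (α • z μ) (u θ)| = α * |det2 (z μ) (u θ)| := by
            rw [det2_smul_left, abs_mul, abs_of_nonneg hα0]
        _ ≤ 2 * 1 := mul_le_mul h2 h1 (abs_nonneg _) (by norm_num)
        _ = 2 := by norm_num
    have hK₂bdd : BddAbove ((fun y => |det2 y (u θ)|) '' K₂) :=
      ⟨2, by rintro _ ⟨y, hy, rfl⟩; exact hbK₂ y hy⟩
    have hK₂ne : ((fun y => |det2 y (u θ)|) '' K₂).Nonempty :=
      ⟨_, Set.mem_image_of_mem _ hwK₂⟩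
    set M := sSup ((fun y => |det2 y (u θ)|) '' K₂) with hM
    have hθM : θ ≤ M := by
      rw [← hGw]; exact le_csSup hK₂bdd (Set.mem_image_of_mem _ hwK₂)
    have h1θM : 1 - θ ≤ M := by
      rw [← hGv]; exact le_csSup hK₂bdd (Set.mem_image_of_mem _ hvK₂)
    have hbK : ∀ y ∈ K, |det2 y (u θ)| ≤ M := by
      intro x hx
      rw [hK] at hx
      have h1 : ∀ y ∈ K₁, |det2 y (u θ)| ≤ M := by
        intro y hy
        obtain ⟨a, b, ha, ha', hb, hb', rfl⟩ := hco y hy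
        have heq : det2 (a • v + b • w) (u θ) = a * (1 - θ) - b * θ := by
          rw [hu', det2_coef, hdet]; ring
        rw [heq, abs_le]
        constructor <;> nlinarith [hθ.1, hθ.2]
      have h2 : ∀ y ∈ K₂, |det2 y (u θ)| ≤ M :=
        fun y hy => le_csSup hK₂bdd (Set.mem_image_of_mem _ hy)
      have hneg : ∀ y : ℝ × ℝ, |det2 (-y) (u θ)| = |det2 y (u θ)| := by
        intro y; rw [det2_neg_left, abs_neg]
      rcases hx with ((hx | hx) | hx) | hx
      · exact h1 x hx
      · exact h2 x hx
      · rw [← neg_neg x, hneg]; exact h1 (-x) (Set.mem_neg.mp hx)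
      · rw [← neg_neg x, hneg]; exact h2 (-x) (Set.mem_neg.mp hx)
    have hKne : ((fun y => |det2 y (u θ)|) '' K).Nonempty :=
      ⟨_, Set.mem_image_of_mem _ hKne0⟩
    apply le_antisymm
    · exact csSup_le hKne (by rintro _ ⟨x, hx, rfl⟩; exact hbK x hx)
    · exact csSup_le_csSup ⟨M, by rintro _ ⟨x, hx, rfl⟩; exact hbK x hx⟩ hK₂ne
        (Set.image_mono hK₂K)
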